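/- Let 0 < q ≤ 1, let x₀ ∈ ℝⁿ be s-sparse with support S, and let h ∈ ℝⁿ be such that x₀ + h ≠ 0 and x₀ ≠ 0. Then ‖x₀ + h‖_q^q / ‖x₀ + h‖₂^q ≥ (‖x₀‖_q^q + ‖h_{Sᶜ}‖_q^q − ‖h_S‖_q^q) / (‖x₀‖₂^q + ‖h‖₂^q), where h_S denotes the restriction of h to S (zero elsewhere). -/

import Mathlib

open Finset Real

lemma rpow_subadd {q x y : ℝ} (hx : 0 ≤ x) (hy : 0 ≤ y) (hq0 : 0 ≤ q) (hq1 : q ≤ 1) :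
    (x + y) ^ q ≤ x ^ q + y ^ q := by
  lift x to NNReal using hx
  lift y to NNReal using hy
  have := NNReal.rpow_add_le_add_rpow x y hq0 hq1
  exact_mod_cast this

theorem stmt_4 (n s : ℕ) (q : ℝ) (hq0 : 0 < q) (hq1 : q ≤ 1)
    (x₀ h : Fin n → ℝ) (S : Finset (Fin n))
    (hS : ∀ i, x₀ i ≠ 0 ↔ i ∈ S) (hcard : S.card ≤ s)
    (hx₀ : x₀ ≠ 0) (hxh : x₀ + h ≠ 0) :
    (∑ i, |x₀ i + h i| ^ q) / (Real.sqrt (∑ i, (x₀ i + h i) ^ 2)) ^ q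
      ≥ ((∑ i, |x₀ i| ^ q) + (∑ i ∈ Sᶜ, |h i| ^ q) - ∑ i ∈ S, |h i| ^ q)
          / ((Real.sqrt (∑ i, (x₀ i) ^ 2)) ^ q + (Real.sqrt (∑ i, (h i) ^ 2)) ^ q) := by
  have hq0' : 0 ≤ q := le_of_lt hq0
  -- q-triangle inequality
  have qtri : ∀ a b : ℝ, |a + b| ^ q ≤ |a| ^ q + |b| ^ q := by
    intro a b
    calc |a + b| ^ q ≤ (|a| + |b|) ^ q :=
          Real.rpow_le_rpow (abs_nonneg _) (abs_add_le a b) hq0'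
      _ ≤ |a| ^ q + |b| ^ q :=
          rpow_subadd (abs_nonneg _) (abs_nonneg _) hq0' hq1
  -- numerator inequality
  have hnum : ((∑ i, |x₀ i| ^ q) + (∑ i ∈ Sᶜ, |h i| ^ q) - ∑ i ∈ S, |h i| ^ q)
      ≤ ∑ i, |x₀ i + h i| ^ q := by
    have hsplit1 : (∑ i, |x₀ i + h i| ^ q)
        = (∑ i ∈ S, |x₀ i + h i| ^ q) + ∑ i ∈ Sᶜ, |x₀ i + h i| ^ q :=
      (Finset.sum_add_sum_compl S _).symm
    have hsplit2 : (∑ i, |x₀ i| ^ q)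
        = (∑ i ∈ S, |x₀ i| ^ q) + ∑ i ∈ Sᶜ, |x₀ i| ^ q :=
      (Finset.sum_add_sum_compl S _).symm
    have hzero : ∀ i ∈ Sᶜ, x₀ i = 0 := by
      intro i hi
      by_contra hne
      exact (Finset.mem_compl.mp hi) ((hS i).mp hne)
    have hcomp : ∀ i ∈ Sᶜ, |x₀ i + h i| ^ q = |h i| ^ q := by
      intro i hi; rw [hzero i hi, zero_add]
    have hcomp0 : ∀ i ∈ Sᶜ, |x₀ i| ^ q = 0 := by
      intro i hi; rw [hzero i hi, abs_zero, Real.zero_rpow (ne_of_gt hq0)]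
    rw [hsplit1, hsplit2, Finset.sum_congr rfl hcomp, Finset.sum_congr rfl hcomp0,
      Finset.sum_const_zero]
    have key : (∑ i ∈ S, |x₀ i| ^ q) ≤ (∑ i ∈ S, |x₀ i + h i| ^ q) + ∑ i ∈ S, |h i| ^ q := by
      rw [← Finset.sum_add_distrib]
      apply Finset.sum_le_sum
      intro i _
      have := qtri (x₀ i + h i) (-h i)
      simpa using this
    linarith
  -- denominator facts
  have hsum_pos : 0 < ∑ i, (x₀ i + h i) ^ 2 := by
    obtain ⟨i, hi⟩ := Function.ne_iff.mp hxh
    apply Finset.sum_pos' (fun j _ => sq_nonneg _) ⟨i, Finset.mem_univ i, ?_⟩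
    have : x₀ i + h i ≠ 0 := hi
    positivity
  have hsumx_pos : 0 < ∑ i, (x₀ i) ^ 2 := by
    obtain ⟨i, hi⟩ := Function.ne_iff.mp hx₀
    exact Finset.sum_pos' (fun j _ => sq_nonneg _) ⟨i, Finset.mem_univ i, by
      have : x₀ i ≠ 0 := hi
      positivity⟩
  have hD_pos : 0 < (Real.sqrt (∑ i, (x₀ i + h i) ^ 2)) ^ q :=
    Real.rpow_pos_of_pos (Real.sqrt_pos.mpr hsum_pos) q
  -- Minkowski
  have mink : Real.sqrt (∑ i, (x₀ i + h i) ^ 2)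
      ≤ Real.sqrt (∑ i, (x₀ i) ^ 2) + Real.sqrt (∑ i, (h i) ^ 2) := by
    have := norm_add_le (E := EuclideanSpace ℝ (Fin n)) (WithLp.toLp 2 x₀) (WithLp.toLp 2 h)
    simpa [EuclideanSpace.norm_eq, sq_abs, Pi.add_apply] using this
  have hden : (Real.sqrt (∑ i, (x₀ i + h i) ^ 2)) ^ q
      ≤ (Real.sqrt (∑ i, (x₀ i) ^ 2)) ^ q + (Real.sqrt (∑ i, (h i) ^ 2)) ^ q := by
    calc (Real.sqrt (∑ i, (x₀ i + h i) ^ 2)) ^ q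
        ≤ (Real.sqrt (∑ i, (x₀ i) ^ 2) + Real.sqrt (∑ i, (h i) ^ 2)) ^ q :=
          Real.rpow_le_rpow (Real.sqrt_nonneg _) mink hq0'
      _ ≤ (Real.sqrt (∑ i, (x₀ i) ^ 2)) ^ q + (Real.sqrt (∑ i, (h i) ^ 2)) ^ q :=
          rpow_subadd (Real.sqrt_nonneg _) (Real.sqrt_nonneg _) hq0' hq1
  have hN_nonneg : 0 ≤ ∑ i, |x₀ i + h i| ^ q :=
    Finset.sum_nonneg fun i _ => Real.rpow_nonneg (abs_nonneg _) q
  exact div_le_div₀ hN_nonneg hnum hD_pos hden
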